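/- For q = 2^r + 1, the set C₁ = { (a₁,...,a_r) ∈ (Z/qZ)^r : a_r = 2a₁ + 4a₂ + ··· + 2^{r−1}a_{r−1} } is an independent set in the r-th strong power of the cycle C_q; that is, any two distinct elements of C₁ differ by at least 2 (cyclically) in some coordinate. -/
import Mathlib


open Finset

lemma two_pow_sum_range (n : ℕ) : ∑ i ∈ Finset.range n, (2 : ℤ) ^ i = 2 ^ n - 1 := by
  induction n with
  | zero => simp
  | succ k ih => rw [Finset.sum_range_succ, ih]; ring

lemma aux_sum (r : ℕ) (g : Fin r → ℤ) (hg : ∀ j, g j = 0 ∨ g j = 1 ∨ g j = -1)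
    (hs : ∑ j : Fin r, 2 ^ (j : ℕ) * g j = 0) : ∀ j, g j = 0 := by
  induction r with
  | zero => intro j; exact j.elim0
  | succ n ih =>
    rw [Fin.sum_univ_succ] at hs
    simp only [Fin.val_zero, pow_zero, one_mul] at hs
    have h2 : ∑ i : Fin n, 2 ^ ((i.succ : Fin (n + 1)) : ℕ) * g i.succ
        = 2 * ∑ i : Fin n, 2 ^ (i : ℕ) * g i.succ := by
      rw [Finset.mul_sum]
      refine Finset.sum_congr rfl fun i _ => ?_
      rw [Fin.val_succ, pow_succ]
      ring
    rw [h2] at hs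
    have hg0 : g 0 = 0 := by rcases hg 0 with h | h | h <;> omega
    have hT : ∑ i : Fin n, 2 ^ (i : ℕ) * g i.succ = 0 := by omega
    have := ih (fun i => g i.succ) (fun i => hg i.succ) hT
    intro j
    exact Fin.cases hg0 this j

theorem stmt15 (r : ℕ) (x y : Fin (r + 1) → ZMod (2 ^ (r + 1) + 1))
    (hx : x (Fin.last r) = ∑ i : Fin r, (2 : ZMod (2 ^ (r + 1) + 1)) ^ ((i : ℕ) + 1) * x i.castSucc)
    (hy : y (Fin.last r) = ∑ i : Fin r, (2 : ZMod (2 ^ (r + 1) + 1)) ^ ((i : ℕ) + 1) * y i.castSucc)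
    (hxy : x ≠ y) :
    ∃ i : Fin (r + 1), x i ≠ y i ∧ x i - y i ≠ 1 ∧ y i - x i ≠ 1 := by
  by_contra hc
  push_neg at hc
  -- integer lifts of the differences
  set e : Fin (r + 1) → ℤ := fun i => if x i = y i then 0 else if x i - y i = 1 then 1 else -1
    with he_def
  have he01 : ∀ i, e i = 0 ∨ e i = 1 ∨ e i = -1 := by
    intro i
    simp only [he_def]
    split_ifs <;> simp
  have he : ∀ i, ((e i : ℤ) : ZMod (2 ^ (r + 1) + 1)) = x i - y i := by
    intro i
    simp only [he_def]
    split_ifs with h1 h2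
    · rw [h1]; simp
    · rw [h2]; simp
    · have h3 := hc i h1 h2
      have h4 : x i - y i = -1 := by linear_combination -h3
      rw [h4]; simp
  have hd : (x (Fin.last r) - y (Fin.last r))
      = ∑ i : Fin r, (2 : ZMod (2 ^ (r + 1) + 1)) ^ ((i : ℕ) + 1)
          * (x i.castSucc - y i.castSucc) := by
    rw [hx, hy, ← Finset.sum_sub_distrib]
    refine Finset.sum_congr rfl fun i _ => ?_
    ring
  -- the combined coefficient function
  set g : Fin (r + 1) → ℤ := fun j => Fin.cases (-(e (Fin.last r))) (fun i => e i.castSucc) j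
    with hg_def
  have hg01 : ∀ j, g j = 0 ∨ g j = 1 ∨ g j = -1 := by
    intro j
    refine Fin.cases ?_ (fun i => ?_) j
    · simp only [hg_def, Fin.cases_zero]
      rcases he01 (Fin.last r) with h | h | h <;> rw [h] <;> simp
    · simp only [hg_def, Fin.cases_succ]
      exact he01 i.castSucc
  set S : ℤ := ∑ j : Fin (r + 1), 2 ^ (j : ℕ) * g j with hS_def
  have hSeq : S = (∑ i : Fin r, 2 ^ ((i : ℕ) + 1) * e i.castSucc) - e (Fin.last r) := by
    rw [hS_def, Fin.sum_univ_succ]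
    simp only [hg_def, Fin.cases_zero, Fin.cases_succ, Fin.val_zero, pow_zero, one_mul,
      Fin.val_succ]
    ring
  have hcast : ((S : ℤ) : ZMod (2 ^ (r + 1) + 1)) = 0 := by
    rw [hSeq]
    push_cast
    simp only [he]
    rw [← hd, sub_self]
  have hdvd : ((2 ^ (r + 1) + 1 : ℕ) : ℤ) ∣ S := by
    rwa [ZMod.intCast_zmod_eq_zero_iff_dvd] at hcast
  have hbound : |S| < ((2 ^ (r + 1) + 1 : ℕ) : ℤ) := by
    have h1 : |S| ≤ ∑ j : Fin (r + 1), |2 ^ (j : ℕ) * g j| := by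
      rw [hS_def]; exact Finset.abs_sum_le_sum_abs _ _
    have h2 : ∀ j : Fin (r + 1), |2 ^ (j : ℕ) * g j| ≤ (2 : ℤ) ^ (j : ℕ) := by
      intro j
      rw [abs_mul, abs_pow]
      rcases hg01 j with h | h | h <;> rw [h] <;> simp
    have h3 : ∑ j : Fin (r + 1), |2 ^ (j : ℕ) * g j| ≤ ∑ j : Fin (r + 1), (2 : ℤ) ^ (j : ℕ) :=
      Finset.sum_le_sum fun j _ => h2 j
    have h4 : ∑ j : Fin (r + 1), (2 : ℤ) ^ (j : ℕ) = 2 ^ (r + 1) - 1 := by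
      rw [Fin.sum_univ_eq_sum_range]
      exact two_pow_sum_range (r + 1)
    have hq' : ((2 ^ (r + 1) + 1 : ℕ) : ℤ) = 2 ^ (r + 1) + 1 := by push_cast; ring
    omega
  have hS0 : S = 0 := Int.eq_zero_of_abs_lt_dvd hdvd hbound
  have hgz : ∀ j, g j = 0 := aux_sum (r + 1) g hg01 (by rw [← hS_def]; exact hS0)
  have hez : ∀ i, e i = 0 := by
    intro i
    refine Fin.lastCases ?_ (fun i => ?_) i
    · have h0 := hgz 0
      simp only [hg_def, Fin.cases_zero] at h0
      omega
    · have h0 := hgz i.succ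
      simpa only [hg_def, Fin.cases_succ] using h0
  apply hxy
  funext i
  have h5 := he i
  rw [hez i] at h5
  simp only [Int.cast_zero] at h5
  exact sub_eq_zero.mp h5.symm
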